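/- The expected number of regions created by the insertion of the k-th object is at most b·f(k)/k, where f(r) is the expected number of empty regions of a random r-sample and b bounds the number of objects defining a region. -/

import Mathlib

open Finset

/-- The set of the first `k` objects of the ordering `σ` (positions `0,…,k-1`). -/
def firstObjects (n : ℕ) (σ : Equiv.Perm (Fin n)) (k : ℕ) : Finset (Fin n) :=
  (Finset.univ.filter (fun i : Fin n => (i : ℕ) < k)).image σ

lemma card_filter_lt_fin (n k : ℕ) (hkn : k ≤ n) :
    (Finset.univ.filter (fun i : Fin n => (i : ℕ) < k)).card = k := by
  have h : (Finset.univ.filter (fun i : Fin n => (i : ℕ) < k)) =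
      (Finset.range k).attachFin (fun m hm => lt_of_lt_of_le (Finset.mem_range.mp hm) hkn) := by
    ext i; simp [Finset.mem_attachFin]
  rw [h, Finset.card_attachFin, Finset.card_range]

lemma card_firstObjects (n k : ℕ) (hkn : k ≤ n) (σ : Equiv.Perm (Fin n)) :
    (firstObjects n σ k).card = k := by
  rw [firstObjects, Finset.card_image_of_injective _ σ.injective, card_filter_lt_fin n k hkn]

lemma exists_perm_map (n : ℕ) (R R' : Finset (Fin n)) (hcard : R.card = R'.card)
    (j j' : Fin n) (hj : j ∈ R) (hj' : j' ∈ R') :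
    ∃ π : Equiv.Perm (Fin n), R.image π = R' ∧ π j = j' := by
  classical
  have hcompl : Fintype.card {x : Fin n // ¬ x ∈ R} = Fintype.card {x : Fin n // ¬ x ∈ R'} := by
    rw [Fintype.card_subtype_compl, Fintype.card_subtype_compl]
    simp [Fintype.card_subtype, hcard]
  let e₁ : {x : Fin n // x ∈ R} ≃ {x : Fin n // x ∈ R'} := Finset.equivOfCardEq hcard
  let e₂ : {x : Fin n // ¬ x ∈ R} ≃ {x : Fin n // ¬ x ∈ R'} := Fintype.equivOfCardEq hcompl
  let π₀ : Equiv.Perm (Fin n) :=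
    ((Equiv.sumCompl (· ∈ R)).symm.trans ((e₁.sumCongr e₂).trans (Equiv.sumCompl (· ∈ R'))))
  have hπ₀ : ∀ x ∈ R, π₀ x ∈ R' := by
    intro x hx
    have : π₀ x = (e₁ ⟨x, hx⟩ : {x : Fin n // x ∈ R'}).val := by
      simp only [π₀, Equiv.trans_apply, Equiv.sumCompl_symm_apply_of_pos hx,
        Equiv.sumCongr_apply, Sum.map_inl, Equiv.sumCompl_apply_inl]
    rw [this]; exact (e₁ ⟨x, hx⟩).2
  have hj0 : π₀ j ∈ R' := hπ₀ j hj
  refine ⟨π₀.trans (Equiv.swap (π₀ j) j'), ?_, ?_⟩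
  · apply Finset.eq_of_subset_of_card_le
    · intro y hy
      simp only [Finset.mem_image] at hy
      obtain ⟨x, hx, rfl⟩ := hy
      simp only [Equiv.trans_apply]
      rcases eq_or_ne (π₀ x) (π₀ j) with h | h
      · rw [h, Equiv.swap_apply_left]; exact hj'
      · rcases eq_or_ne (π₀ x) j' with h2 | h2
        · rw [h2, Equiv.swap_apply_right]; exact hj0
        · rw [Equiv.swap_apply_of_ne_of_ne h h2]; exact hπ₀ x hx
    · rw [Finset.card_image_of_injective _ (Equiv.injective _), hcard]
  · simp [Equiv.swap_apply_left]

lemma fiber_le (n k : ℕ) (hk : 1 ≤ k) (hkn : k ≤ n)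
    (R R' : Finset (Fin n)) (hcard : R.card = R'.card)
    (j j' : Fin n) (hj : j ∈ R) (hj' : j' ∈ R') :
    (Finset.univ.filter (fun σ : Equiv.Perm (Fin n) =>
        firstObjects n σ k = R ∧ σ ⟨k-1, by omega⟩ = j)).card ≤
    (Finset.univ.filter (fun σ : Equiv.Perm (Fin n) =>
        firstObjects n σ k = R' ∧ σ ⟨k-1, by omega⟩ = j')).card := by
  classical
  obtain ⟨π, hπ, hπj⟩ := exists_perm_map n R R' hcard j j' hj hj'
  apply Finset.card_le_card_of_injOn (fun σ => σ.trans π)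
  · intro σ hσ
    simp only [Finset.mem_coe, Finset.mem_filter, Finset.mem_univ, true_and] at hσ ⊢
    obtain ⟨h1, h2⟩ := hσ
    constructor
    · have : firstObjects n (σ.trans π) k = (firstObjects n σ k).image π := by
        simp only [firstObjects, Finset.image_image]
        rfl
      rw [this, h1, hπ]
    · simp only [Equiv.trans_apply, h2, hπj]
  · intro a _ b _ h
    have := congrArg (fun σ : Equiv.Perm (Fin n) => σ.trans π.symm) h
    simpa [Equiv.trans_assoc] using this

theorem expected_created_le
    (n b k : ℕ) (hk : 1 ≤ k) (hkn : k ≤ n)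
    {Region : Type} [Fintype Region] (D : Region → Finset (Fin n))
    (conflict : Fin n → Region → Prop) [∀ o F, Decidable (conflict o F)]
    (hD : ∀ F, (D F).card ≤ b) :
    (∑ σ : Equiv.Perm (Fin n),
        ((Finset.univ.filter (fun F : Region =>
          D F ⊆ firstObjects n σ k ∧
          (∀ x ∈ firstObjects n σ k, ¬ conflict x F) ∧
          σ ⟨k - 1, by omega⟩ ∈ D F)).card : ℝ))
      / (Nat.factorial n : ℝ)
    ≤ (b : ℝ) *
        ((∑ R ∈ Finset.univ.powersetCard k,
            ((Finset.univ.filter (fun F : Region =>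
              D F ⊆ R ∧ ∀ x ∈ R, ¬ conflict x F)).card : ℝ))
          / (Nat.choose n k : ℝ)) / (k : ℝ) := by
  classical
  set J : Fin n := ⟨k - 1, by omega⟩ with hJ
  set g : Equiv.Perm (Fin n) → Σ _ : Finset (Fin n), Fin n :=
    fun σ => ⟨firstObjects n σ k, σ J⟩ with hg
  set V : Finset (Σ _ : Finset (Fin n), Fin n) :=
    (Finset.univ.powersetCard k).sigma (fun R => R) with hV
  set c : (Σ _ : Finset (Fin n), Fin n) → ℕ := fun p =>
    (Finset.univ.filter (fun F : Region =>
      D F ⊆ p.1 ∧ (∀ x ∈ p.1, ¬ conflict x F) ∧ p.2 ∈ D F)).card with hc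
  set A : ℕ := ∑ σ : Equiv.Perm (Fin n),
      (Finset.univ.filter (fun F : Region =>
        D F ⊆ firstObjects n σ k ∧
        (∀ x ∈ firstObjects n σ k, ¬ conflict x F) ∧
        σ J ∈ D F)).card with hA
  set S : ℕ := ∑ R ∈ Finset.univ.powersetCard k,
      (Finset.univ.filter (fun F : Region =>
        D F ⊆ R ∧ ∀ x ∈ R, ¬ conflict x F)).card with hS
  -- every permutation lands in V
  have hmaps : ∀ σ ∈ (Finset.univ : Finset (Equiv.Perm (Fin n))), g σ ∈ V := by
    intro σ _
    rw [hV, Finset.mem_sigma]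
    constructor
    · rw [Finset.mem_powersetCard]
      exact ⟨Finset.subset_univ _, card_firstObjects n k hkn σ⟩
    · refine Finset.mem_image_of_mem σ ?_
      simp only [Finset.mem_filter, Finset.mem_univ, true_and, hJ]
      omega
  -- membership facts for p ∈ V
  have hVmem : ∀ p ∈ V, p.1.card = k ∧ p.2 ∈ p.1 := by
    intro p hp
    rw [hV, Finset.mem_sigma, Finset.mem_powersetCard] at hp
    exact ⟨hp.1.2, hp.2⟩
  -- all fibers have equal cardinality
  have hfib : ∀ p ∈ V, ∀ q ∈ V,
      (Finset.univ.filter (fun σ : Equiv.Perm (Fin n) => g σ = p)).card =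
      (Finset.univ.filter (fun σ : Equiv.Perm (Fin n) => g σ = q)).card := by
    intro p hp q hq
    obtain ⟨hp1, hp2⟩ := hVmem p hp
    obtain ⟨hq1, hq2⟩ := hVmem q hq
    have hfilter : ∀ r : Σ _ : Finset (Fin n), Fin n,
        (Finset.univ.filter (fun σ : Equiv.Perm (Fin n) => g σ = r)) =
        (Finset.univ.filter (fun σ : Equiv.Perm (Fin n) =>
          firstObjects n σ k = r.1 ∧ σ J = r.2)) := by
      intro r
      apply Finset.filter_congr
      intro σ _
      simp only [hg, Sigma.ext_iff]
      constructor
      · rintro ⟨h1, h2⟩; exact ⟨h1, by simpa using h2⟩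
      · rintro ⟨h1, h2⟩; exact ⟨h1, by simpa using h2⟩
    rw [hfilter p, hfilter q]
    exact le_antisymm
      (fiber_le n k hk hkn p.1 q.1 (hp1.trans hq1.symm) p.2 q.2 hp2 hq2)
      (fiber_le n k hk hkn q.1 p.1 (hq1.trans hp1.symm) q.2 p.2 hq2 hp2)
  -- cardinality of V
  have hVcard : V.card = n.choose k * k := by
    rw [hV, Finset.card_sigma]
    rw [Finset.sum_congr rfl (fun R hR => (Finset.mem_powersetCard.mp hR).2)]
    simp [Finset.card_powersetCard, mul_comm]
  -- each fiber has cardinality n! / (C(n,k) k)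
  have hfibfact : ∀ p ∈ V,
      (Finset.univ.filter (fun σ : Equiv.Perm (Fin n) => g σ = p)).card *
        (n.choose k * k) = n.factorial := by
    intro p hp
    have h1 : (Finset.univ : Finset (Equiv.Perm (Fin n))).card =
        ∑ q ∈ V, (Finset.univ.filter (fun σ : Equiv.Perm (Fin n) => g σ = q)).card :=
      Finset.card_eq_sum_card_fiberwise hmaps
    have h2 : ∑ q ∈ V, (Finset.univ.filter (fun σ : Equiv.Perm (Fin n) => g σ = q)).card =
        V.card * (Finset.univ.filter (fun σ : Equiv.Perm (Fin n) => g σ = p)).card := by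
      rw [Finset.sum_congr rfl (fun q hq => hfib q hq p hp), Finset.sum_const, smul_eq_mul]
    have h3 : (Finset.univ : Finset (Equiv.Perm (Fin n))).card = n.factorial := by
      rw [Finset.card_univ, Fintype.card_perm, Fintype.card_fin]
    rw [mul_comm, ← hVcard, ← h2, ← h1, h3]
  -- decompose A over fibers
  have hA2 : A = ∑ p ∈ V,
      (Finset.univ.filter (fun σ : Equiv.Perm (Fin n) => g σ = p)).card * c p := by
    rw [hA]
    rw [← Finset.sum_fiberwise_of_maps_to hmaps (fun σ =>
      (Finset.univ.filter (fun F : Region =>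
        D F ⊆ firstObjects n σ k ∧
        (∀ x ∈ firstObjects n σ k, ¬ conflict x F) ∧
        σ J ∈ D F)).card)]
    refine Finset.sum_congr rfl (fun p _ => ?_)
    have hconst : ∀ σ ∈ Finset.univ.filter (fun σ : Equiv.Perm (Fin n) => g σ = p),
        (Finset.univ.filter (fun F : Region =>
          D F ⊆ firstObjects n σ k ∧
          (∀ x ∈ firstObjects n σ k, ¬ conflict x F) ∧
          σ J ∈ D F)).card = c p := by
      intro σ hσ
      have hgσ : g σ = p := (Finset.mem_filter.mp hσ).2
      rw [← hgσ]
    rw [Finset.sum_congr rfl hconst, Finset.sum_const, smul_eq_mul]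
  -- the combinatorial bound: sum of c over V is at most b * S
  have hcb : ∑ p ∈ V, c p ≤ b * S := by
    rw [hV, Finset.sum_sigma]
    rw [hS, Finset.mul_sum]
    apply Finset.sum_le_sum
    intro R hR
    have hsum : ∀ j ∈ R, c ⟨R, j⟩ =
        ∑ F : Region, if D F ⊆ R ∧ (∀ x ∈ R, ¬ conflict x F) ∧ j ∈ D F then 1 else 0 := by
      intro j _
      show (Finset.univ.filter (fun F : Region =>
        D F ⊆ R ∧ (∀ x ∈ R, ¬ conflict x F) ∧ j ∈ D F)).card = _
      rw [Finset.card_filter]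
    calc ∑ j ∈ R, c ⟨R, j⟩
        = ∑ j ∈ R, ∑ F : Region,
            (if D F ⊆ R ∧ (∀ x ∈ R, ¬ conflict x F) ∧ j ∈ D F then 1 else 0) :=
          Finset.sum_congr rfl hsum
      _ = ∑ F : Region, ∑ j ∈ R,
            (if D F ⊆ R ∧ (∀ x ∈ R, ¬ conflict x F) ∧ j ∈ D F then 1 else 0) :=
          Finset.sum_comm
      _ ≤ ∑ F : Region,
            b * (if D F ⊆ R ∧ (∀ x ∈ R, ¬ conflict x F) then 1 else 0) := by
          apply Finset.sum_le_sum
          intro F _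
          by_cases h : D F ⊆ R ∧ (∀ x ∈ R, ¬ conflict x F)
          · have : ∀ j ∈ R, (if D F ⊆ R ∧ (∀ x ∈ R, ¬ conflict x F) ∧ j ∈ D F then 1 else 0)
                = if j ∈ D F then 1 else 0 := by
              intro j _
              by_cases hjD : j ∈ D F
              · rw [if_pos ⟨h.1, h.2, hjD⟩, if_pos hjD]
              · rw [if_neg (by tauto), if_neg hjD]
            rw [Finset.sum_congr rfl this, ← Finset.card_filter]
            calc (R.filter (· ∈ D F)).card ≤ (D F).card :=
                  Finset.card_le_card (fun x hx => (Finset.mem_filter.mp hx).2)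
              _ ≤ b := hD F
              _ = b * (if D F ⊆ R ∧ (∀ x ∈ R, ¬ conflict x F) then 1 else 0) := by
                  rw [if_pos h, mul_one]
          · have : ∀ j ∈ R, (if D F ⊆ R ∧ (∀ x ∈ R, ¬ conflict x F) ∧ j ∈ D F then 1 else 0)
                = 0 := by
              intro j _
              rw [if_neg]
              tauto
            rw [Finset.sum_congr rfl this, Finset.sum_const_zero]
            exact Nat.zero_le _
      _ = b * (Finset.univ.filter (fun F : Region =>
            D F ⊆ R ∧ ∀ x ∈ R, ¬ conflict x F)).card := by
          rw [← Finset.mul_sum, ← Finset.card_filter]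
  -- the key natural-number inequality
  have key : A * (n.choose k * k) ≤ n.factorial * (b * S) := by
    rw [hA2, Finset.sum_mul]
    calc ∑ p ∈ V, (Finset.univ.filter (fun σ : Equiv.Perm (Fin n) => g σ = p)).card
            * c p * (n.choose k * k)
        = ∑ p ∈ V, n.factorial * c p := by
          apply Finset.sum_congr rfl
          intro p hp
          rw [mul_right_comm, hfibfact p hp]
      _ = n.factorial * ∑ p ∈ V, c p := by rw [Finset.mul_sum]
      _ ≤ n.factorial * (b * S) := Nat.mul_le_mul_left _ hcb
  -- transfer to the reals
  have hsumA : (∑ σ : Equiv.Perm (Fin n),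
      ((Finset.univ.filter (fun F : Region =>
        D F ⊆ firstObjects n σ k ∧
        (∀ x ∈ firstObjects n σ k, ¬ conflict x F) ∧
        σ ⟨k - 1, by omega⟩ ∈ D F)).card : ℝ)) = (A : ℝ) := by
    rw [hA]; push_cast; rfl
  have hsumS : (∑ R ∈ Finset.univ.powersetCard k,
      ((Finset.univ.filter (fun F : Region =>
        D F ⊆ R ∧ ∀ x ∈ R, ¬ conflict x F)).card : ℝ)) = (S : ℝ) := by
    rw [hS]; push_cast; rfl
  rw [hsumA, hsumS]
  have hfact : (0:ℝ) < (n.factorial : ℝ) := by exact_mod_cast n.factorial_pos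
  have hchoose : (0:ℝ) < (n.choose k : ℝ) := by exact_mod_cast Nat.choose_pos hkn
  have hkpos : (0:ℝ) < (k : ℝ) := by exact_mod_cast hk
  have hrhs : (b : ℝ) * ((S : ℝ) / (n.choose k : ℝ)) / (k : ℝ)
      = ((b : ℝ) * (S : ℝ)) / ((n.choose k : ℝ) * (k : ℝ)) := by
    field_simp
  rw [hrhs, div_le_div_iff₀ hfact (by positivity)]
  calc (A : ℝ) * ((n.choose k : ℝ) * (k : ℝ)) = ((A * (n.choose k * k) : ℕ) : ℝ) := by
        push_cast; ring
    _ ≤ ((n.factorial * (b * S) : ℕ) : ℝ) := by exact_mod_cast key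
    _ = (b : ℝ) * (S : ℝ) * (n.factorial : ℝ) := by push_cast; ring
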